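/- Combining perturbation and covariance: let σᵢᵏ (i=1..n, k=1..K, K ≥ 2) be i.i.d. with mean 0 and variance 1, H symmetric positive definite, gᵢ ∈ ℝᵈ, Δθᵏ = H⁻¹ (1/n) Σᵢ σᵢᵏ gᵢ, and I(xᵢ,xⱼ) = gᵢᵀ Ĉ gⱼ with Ĉ the empirical covariance of {Δθᵏ}. If H = (1/n) Σᵢ gᵢgᵢᵀ, then E[I(xᵢ,xⱼ)] = (1/n) gᵢᵀ H⁻¹ gⱼ. -/

import Mathlib

open scoped BigOperators
open MeasureTheory ProbabilityTheory Matrix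

section Aux

variable {d n : ℕ}

lemma daunce_dot_vecMulVec (a u v b : Fin d → ℝ) :
    a ⬝ᵥ (vecMulVec u v).mulVec b = (a ⬝ᵥ u) * (v ⬝ᵥ b) := by
  simp only [Matrix.mulVec, Matrix.vecMulVec_apply, dotProduct, Finset.sum_mul,
    Finset.mul_sum]
  rw [Finset.sum_comm]
  exact Finset.sum_congr rfl fun x _ => Finset.sum_congr rfl fun y _ => by ring

lemma daunce_dot_sum {ι : Type*} (s : Finset ι) (a : Fin d → ℝ) (w : ι → Fin d → ℝ) :
    a ⬝ᵥ (∑ l ∈ s, w l) = ∑ l ∈ s, a ⬝ᵥ w l := by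
  simp only [dotProduct, Finset.sum_apply, Finset.mul_sum]
  exact Finset.sum_comm

lemma daunce_sum_mulVec {ι : Type*} (s : Finset ι) (M : ι → Matrix (Fin d) (Fin d) ℝ)
    (w : Fin d → ℝ) : (∑ l ∈ s, M l).mulVec w = ∑ l ∈ s, (M l).mulVec w := by
  ext x
  simp only [Matrix.mulVec, dotProduct, Finset.sum_apply, Matrix.sum_apply,
    Finset.sum_mul]
  exact Finset.sum_comm

lemma daunce_dot_expand (a : Fin d → ℝ) (M : Matrix (Fin d) (Fin d) ℝ) (s : Fin n → ℝ)
    (g : Fin n → Fin d → ℝ) :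
    a ⬝ᵥ M.mulVec (((n:ℝ))⁻¹ • ∑ l, s l • g l)
      = ∑ l, s l * ((n:ℝ)⁻¹ * (a ⬝ᵥ M.mulVec (g l))) := by
  rw [Matrix.dotProduct_mulVec, dotProduct_smul, daunce_dot_sum]
  rw [Finset.smul_sum]
  refine Finset.sum_congr rfl fun l _ => ?_
  rw [dotProduct_smul, Matrix.dotProduct_mulVec]
  simp [smul_eq_mul]; ring

end Aux

/-- Theorem 1 (unbiasedness of the DAUNCE estimator, exact linear case).
With σᵢᵏ i.i.d. zero-mean unit-variance, H = (1/n)Σᵢgᵢgᵢᵀ invertible,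
Δθᵏ = H⁻¹ (1/n) Σᵢ σᵢᵏ gᵢ, Ĉ the empirical covariance of the Δθᵏ (K ≥ 2), and
I(xᵢ,xⱼ) = gᵢᵀ Ĉ gⱼ, we have E[I(xᵢ,xⱼ)] = (1/n) gᵢᵀ H⁻¹ gⱼ. -/
theorem stmt_13 {Ω : Type*} [MeasureSpace Ω] [IsProbabilityMeasure (ℙ : Measure Ω)]
    {d n K : ℕ} (hK : 2 ≤ K) (σ : Fin n → Fin K → Ω → ℝ)
    (hmeas : ∀ i k, Measurable (σ i k))
    (hindep : iIndepFun
      (fun (p : Fin n × Fin K) ω => σ p.1 p.2 ω) ℙ)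
    (hident : ∀ i k i' k', IdentDistrib (σ i k) (σ i' k') ℙ ℙ)
    (hL2 : ∀ i k, MemLp (σ i k) 2 ℙ)
    (hmean : ∀ i k, ∫ ω, σ i k ω = 0)
    (hvar : ∀ i k, ∫ ω, (σ i k ω)^2 = 1)
    (g : Fin n → Fin d → ℝ)
    (H : Matrix (Fin d) (Fin d) ℝ)
    (hH : H = ((n:ℝ))⁻¹ • ∑ i, vecMulVec (g i) (g i))
    (hHinv : IsUnit H.det)
    (Δθ : Fin K → Ω → Fin d → ℝ)
    (hΔθ : ∀ k ω, Δθ k ω = H⁻¹.mulVec (((n:ℝ))⁻¹ • ∑ i, σ i k ω • g i))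
    (Chat : Ω → Matrix (Fin d) (Fin d) ℝ)
    (hChat : ∀ ω, Chat ω = ((K:ℝ) - 1)⁻¹ •
      (∑ k, vecMulVec (Δθ k ω) (Δθ k ω)
        - ((K:ℝ))⁻¹ • vecMulVec (∑ k, Δθ k ω) (∑ k, Δθ k ω)))
    (i j : Fin n) :
    (∫ ω, g i ⬝ᵥ (Chat ω).mulVec (g j))
      = ((n:ℝ))⁻¹ * (g i ⬝ᵥ H⁻¹.mulVec (g j)) := by
  classical
  have hn : (n : ℝ) ≠ 0 := Nat.cast_ne_zero.mpr i.pos.ne'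
  have hK0 : (K : ℝ) ≠ 0 := by
    have : (0:ℕ) < K := by omega
    exact_mod_cast this.ne'
  have hK1 : (K : ℝ) - 1 ≠ 0 := by
    have : (2:ℝ) ≤ (K:ℝ) := by exact_mod_cast hK
    linarith
  set A := H⁻¹ with hA
  -- coefficient vectors
  set c : Fin n → ℝ := fun l => (n:ℝ)⁻¹ * (g i ⬝ᵥ A.mulVec (g l)) with hc
  set e : Fin n → ℝ := fun l => (n:ℝ)⁻¹ * (g j ⬝ᵥ A.mulVec (g l)) with he
  -- Step A/B : the two linear forms
  have hAk : ∀ k ω, g i ⬝ᵥ Δθ k ω = ∑ l, σ l k ω * c l := by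
    intro k ω; rw [hΔθ]; exact daunce_dot_expand _ _ _ _
  have hBk : ∀ k ω, Δθ k ω ⬝ᵥ g j = ∑ l, σ l k ω * e l := by
    intro k ω; rw [dotProduct_comm, hΔθ]; exact daunce_dot_expand _ _ _ _
  -- integrability of products of sigmas
  have hInt : ∀ (l : Fin n) (k : Fin K) (m : Fin n) (k' : Fin K),
      Integrable (fun ω => σ l k ω * σ m k' ω) ℙ := by
    intro l k m k'
    by_cases hlm : (l, k) = (m, k')
    · obtain ⟨rfl, rfl⟩ := Prod.mk.inj hlm
      have := (hL2 l k).integrable_sq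
      simpa [sq] using this
    · have hind : IndepFun (σ l k) (σ m k') ℙ :=
        hindep.indepFun (i := (l, k)) (j := (m, k')) hlm
      exact hind.integrable_mul ((hL2 l k).integrable one_le_two)
        ((hL2 m k').integrable one_le_two)
  -- expected value of products of sigmas
  have hEσ : ∀ (l : Fin n) (k : Fin K) (m : Fin n) (k' : Fin K),
      (∫ ω, σ l k ω * σ m k' ω) = if (l, k) = (m, k') then 1 else 0 := by
    intro l k m k'
    by_cases hlm : (l, k) = (m, k')
    · obtain ⟨rfl, rfl⟩ := Prod.mk.inj hlm
      simp only [hlm, if_pos]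
      simpa [sq] using hvar l k
    · have hind : IndepFun (σ l k) (σ m k') ℙ :=
        hindep.indepFun (i := (l, k)) (j := (m, k')) hlm
      rw [if_neg hlm]
      have h0 := hind.integral_fun_mul_eq_mul_integral ((hL2 l k).aestronglyMeasurable)
        ((hL2 m k').aestronglyMeasurable)
      have h2 : (∫ ω, σ l k ω * σ m k' ω) = (∫ ω, σ l k ω) * ∫ ω, σ m k' ω := h0
      rw [h2, hmean, zero_mul]
  -- the common value S
  set S : ℝ := ∑ l, c l * e l with hS
  -- integrability of products of linear forms
  have hABint : ∀ k k', Integrable (fun ω => (g i ⬝ᵥ Δθ k ω) * (Δθ k' ω ⬝ᵥ g j)) ℙ := by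
    intro k k'
    have : (fun ω => (g i ⬝ᵥ Δθ k ω) * (Δθ k' ω ⬝ᵥ g j))
        = fun ω => ∑ l, ∑ m, (σ l k ω * σ m k' ω) * (c l * e m) := by
      funext ω
      rw [hAk, hBk, Finset.sum_mul_sum]
      exact Finset.sum_congr rfl fun l _ => Finset.sum_congr rfl fun m _ => by ring
    rw [this]
    exact integrable_finset_sum _ fun l _ =>
      integrable_finset_sum _ fun m _ => (hInt l k m k').mul_const _
  -- expectation of products of linear forms
  have hP : ∀ k k', (∫ ω, (g i ⬝ᵥ Δθ k ω) * (Δθ k' ω ⬝ᵥ g j))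
      = if k = k' then S else 0 := by
    intro k k'
    have h1 : (fun ω => (g i ⬝ᵥ Δθ k ω) * (Δθ k' ω ⬝ᵥ g j))
        = fun ω => ∑ l, ∑ m, (σ l k ω * σ m k' ω) * (c l * e m) := by
      funext ω
      rw [hAk, hBk, Finset.sum_mul_sum]
      exact Finset.sum_congr rfl fun l _ => Finset.sum_congr rfl fun m _ => by ring
    rw [h1, integral_finset_sum _ fun l _ => integrable_finset_sum _
      fun m _ => (hInt l k _ k').mul_const _]
    have h2 : ∀ l, (∫ ω, ∑ m, (σ l k ω * σ m k' ω) * (c l * e m))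
        = ∑ m, (if (l, k) = (m, k') then 1 else 0) * (c l * e m) := by
      intro l
      rw [integral_finset_sum _ fun m _ => (hInt l k m k').mul_const _]
      exact Finset.sum_congr rfl fun m _ => by rw [integral_mul_const, hEσ]
    simp only [h2]
    by_cases hkk : k = k'
    · subst hkk
      rw [if_pos rfl, hS]
      refine Finset.sum_congr rfl fun l _ => ?_
      rw [Finset.sum_eq_single l]
      · simp
      · intro m _ hml; simp [Prod.ext_iff, (Ne.symm hml : l ≠ m)]
      · simp
    · rw [if_neg hkk]
      refine Finset.sum_eq_zero fun l _ => Finset.sum_eq_zero fun m _ => ?_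
      have : (l, k) ≠ (m, k') := by simp [Prod.ext_iff, hkk]
      simp [this]
  -- pointwise identity for the integrand
  have hpt : ∀ ω, g i ⬝ᵥ (Chat ω).mulVec (g j)
      = ((K:ℝ) - 1)⁻¹ * ((∑ k, (g i ⬝ᵥ Δθ k ω) * (Δθ k ω ⬝ᵥ g j))
        - (K:ℝ)⁻¹ * ∑ k, ∑ k', (g i ⬝ᵥ Δθ k ω) * (Δθ k' ω ⬝ᵥ g j)) := by
    intro ω
    rw [hChat]
    rw [Matrix.smul_mulVec, dotProduct_smul, smul_eq_mul]
    congr 1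
    rw [Matrix.sub_mulVec, dotProduct_sub]
    congr 1
    · rw [daunce_sum_mulVec, daunce_dot_sum]
      exact Finset.sum_congr rfl fun k _ => daunce_dot_vecMulVec _ _ _ _
    · rw [Matrix.smul_mulVec, dotProduct_smul, smul_eq_mul]
      congr 1
      rw [daunce_dot_vecMulVec, daunce_dot_sum]
      rw [show (∑ k, Δθ k ω) ⬝ᵥ g j = ∑ k', Δθ k' ω ⬝ᵥ g j by
        rw [dotProduct_comm, daunce_dot_sum]
        exact Finset.sum_congr rfl fun k _ => dotProduct_comm _ _]
      rw [Finset.sum_mul_sum]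
  -- symmetry of H and A
  have hHsymm : Hᵀ = H := by
    rw [hH, Matrix.transpose_smul]
    congr 1
    rw [Matrix.transpose_sum]
    refine Finset.sum_congr rfl fun l _ => ?_
    ext x y
    simp [Matrix.vecMulVec_apply, mul_comm]
  have hAsymm : Aᵀ = A := by
    rw [hA, Matrix.transpose_nonsing_inv, hHsymm]
  -- value of S
  have hsumH : (∑ l, vecMulVec (g l) (g l)) = (n:ℝ) • H := by
    rw [hH, smul_smul, mul_inv_cancel₀ hn, one_smul]
  have hSG : S = (n:ℝ)⁻¹ * (g i ⬝ᵥ A.mulVec (g j)) := by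
    have h1 : ∀ l : Fin n, c l * e l
        = (n:ℝ)⁻¹ * (n:ℝ)⁻¹
          * ((g i ᵥ* A) ⬝ᵥ (vecMulVec (g l) (g l)).mulVec (A.mulVec (g j))) := by
      intro l
      rw [daunce_dot_vecMulVec]
      have h2 : g j ⬝ᵥ A.mulVec (g l) = g l ⬝ᵥ A.mulVec (g j) := by
        rw [Matrix.dotProduct_mulVec, ← hAsymm, Matrix.vecMul_transpose,
          dotProduct_comm, hAsymm]
      have h3 : g i ⬝ᵥ A.mulVec (g l) = (g i ᵥ* A) ⬝ᵥ g l :=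
        Matrix.dotProduct_mulVec _ _ _
      simp only [hc, he]
      rw [h2, h3]
      ring
    rw [hS]
    simp only [h1]
    rw [← Finset.mul_sum, ← daunce_dot_sum, ← daunce_sum_mulVec, hsumH,
      Matrix.smul_mulVec, dotProduct_smul, smul_eq_mul,
      Matrix.mulVec_mulVec, Matrix.mul_nonsing_inv H hHinv, Matrix.one_mulVec,
      ← Matrix.dotProduct_mulVec]
    field_simp
  -- integrate everything
  have hint1 : Integrable (fun ω => ∑ k, (g i ⬝ᵥ Δθ k ω) * (Δθ k ω ⬝ᵥ g j)) ℙ :=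
    integrable_finset_sum _ fun k _ => hABint k k
  have hint2 : Integrable (fun ω => ∑ k, ∑ k', (g i ⬝ᵥ Δθ k ω) * (Δθ k' ω ⬝ᵥ g j)) ℙ :=
    integrable_finset_sum _ fun k _ => integrable_finset_sum _ fun k' _ => hABint k k'
  have hfinal : (∫ ω, g i ⬝ᵥ (Chat ω).mulVec (g j)) = S := by
    calc (∫ ω, g i ⬝ᵥ (Chat ω).mulVec (g j))
        = ∫ ω, ((K:ℝ) - 1)⁻¹ * ((∑ k, (g i ⬝ᵥ Δθ k ω) * (Δθ k ω ⬝ᵥ g j))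
          - (K:ℝ)⁻¹ * ∑ k, ∑ k', (g i ⬝ᵥ Δθ k ω) * (Δθ k' ω ⬝ᵥ g j)) := by
          simp only [hpt]
      _ = ((K:ℝ) - 1)⁻¹ * (((K:ℕ):ℝ) * S - (K:ℝ)⁻¹ * (((K:ℕ):ℝ) * S)) := by
          rw [integral_const_mul, integral_sub hint1 (hint2.const_mul _),
            integral_finset_sum _ (fun k _ => hABint k k), integral_const_mul,
            integral_finset_sum _ (fun k _ => integrable_finset_sum _
              fun k' _ => hABint k k')]
          congr 2
          · simp only [hP, if_pos rfl, if_true]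
            rw [Finset.sum_const, Finset.card_univ, Fintype.card_fin, nsmul_eq_mul]
          · congr 1
            have : ∀ k : Fin K, (∫ ω, ∑ k', (g i ⬝ᵥ Δθ k ω) * (Δθ k' ω ⬝ᵥ g j)) = S := by
              intro k
              rw [integral_finset_sum _ (fun k' _ => hABint k k')]
              simp only [hP]
              simp
            simp only [this]
            rw [Finset.sum_const, Finset.card_univ, Fintype.card_fin, nsmul_eq_mul]
      _ = S := by field_simp
  rw [hfinal, hSG, hA]
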